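/- arXiv:2302.04731 — 3 statements merged into one kernel-verified Lean document; each statement's English description precedes it below -/
import Mathlib

section
/- There exists a decidable hypothesis class 𝓗 ⊆ {0,1}^ℕ consisting only of finitely supported functions with pairwise disjoint supports such that for every k ∈ ℕ, 𝓗 admits no computable k-witness of VC dimension. -/
open Filter
open scoped ENNReal

/-- A hypothesis is a function `ℕ → Bool` (i.e. an element of `{0,1}^ℕ`). -/
abbrev Hyp := ℕ → Bool

/-- A sample is a finite sequence of labeled examples. -/
abbrev Sample := List (ℕ × Bool)

/-- A learner maps samples to hypotheses. -/
abbrev Learner := Sample → Hyp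

/-- Generalization error `L_D(h) = Pr_{(x,y)∼D}[h(x) ≠ y]`. -/
noncomputable def genError (D : PMF (ℕ × Bool)) (h : Hyp) : ℝ≥0∞ :=
  D.toOuterMeasure {p | h p.1 ≠ p.2}

/-- The distribution of `m` i.i.d. draws from `D`, as a PMF on samples of size `m`. -/
noncomputable def iidPMF (D : PMF (ℕ × Bool)) : ℕ → PMF Sample
  | 0 => PMF.pure []
  | m + 1 => D.bind fun p => (iidPMF D m).map (List.cons p)

/-- `Pr_{S ∼ D^m}[S ∈ E]`. -/
noncomputable def samplePr (D : PMF (ℕ × Bool)) (m : ℕ) (E : Set Sample) : ℝ≥0∞ :=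
  (iidPMF D m).toOuterMeasure E

/-- The PAC inequality for accuracy/confidence parameter `n` and sample size `m`:
for every distribution `D`,
`Pr_{S∼D^m}[L_D(A(S)) ≤ inf_{h∈H} L_D(h) + 1/n] ≥ 1 − 1/n`. -/
def PACCondition (A : Learner) (H : Set Hyp) (n m : ℕ) : Prop :=
  ∀ D : PMF (ℕ × Bool),
    1 - ((n : ℝ≥0∞))⁻¹ ≤
      samplePr D m {S | genError D (A S) ≤ (⨅ h ∈ H, genError D h) + ((n : ℝ≥0∞))⁻¹}

/-- `A` PAC learns `H`. -/
def PACLearns (A : Learner) (H : Set Hyp) : Prop :=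
  ∀ n : ℕ, ∃ m₀ : ℕ, ∀ m ≥ m₀, PACCondition A H n m

/-- The sample complexity of `A` w.r.t. `H`: the minimal `m₀` such that the PAC
inequality for `n` holds for all `m ≥ m₀`. -/
noncomputable def sampleComplexity (A : Learner) (H : Set Hyp) (n : ℕ) : ℕ :=
  sInf {m₀ | ∀ m ≥ m₀, PACCondition A H n m}

/-- A learner is computable if the two-argument function `(S, x) ↦ A(S)(x)` is computable
(equivalently, there is an algorithm producing from `S` a Turing machine computing the
total function `A(S)`). -/
def ComputableLearner (A : Learner) : Prop :=
  Computable₂ fun (S : Sample) (x : ℕ) => A S x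

/-- A learner is proper for `H` if it only outputs hypotheses from `H`. -/
def ProperFor (A : Learner) (H : Set Hyp) : Prop := ∀ S, A S ∈ H

/-- `H` is CPAC learnable: some computable learner PAC learns it. -/
def CPACLearnable (H : Set Hyp) : Prop :=
  ∃ A : Learner, ComputableLearner A ∧ PACLearns A H

/-- `H` is properly CPAC learnable. -/
def ProperlyCPACLearnable (H : Set Hyp) : Prop :=
  ∃ A : Learner, ComputableLearner A ∧ ProperFor A H ∧ PACLearns A H

/-- `H` is SCPAC learnable: some computable learner PAC learns it with sample complexity
bounded by a total computable function. -/
def SCPACLearnable (H : Set Hyp) : Prop :=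
  ∃ A : Learner, ComputableLearner A ∧ PACLearns A H ∧
    ∃ g : ℕ → ℕ, Computable g ∧ ∀ n, sampleComplexity A H n ≤ g n

/-- `H` is properly SCPAC learnable. -/
def ProperlySCPACLearnable (H : Set Hyp) : Prop :=
  ∃ A : Learner, ComputableLearner A ∧ ProperFor A H ∧ PACLearns A H ∧
    ∃ g : ℕ → ℕ, Computable g ∧ ∀ n, sampleComplexity A H n ≤ g n

/-- Empirical error `L_S(h) = |{i : h(x_i) ≠ y_i}| / |S|`. -/
noncomputable def empError (S : Sample) (h : Hyp) : ℝ≥0∞ :=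
  ((S.countP fun p => h p.1 != p.2 : ℕ) : ℝ≥0∞) / (S.length : ℝ≥0∞)

/-- `A` is an ERM for `H`: on every sample it outputs a hypothesis of `H` minimizing
the empirical error over `H`. -/
def IsERM (A : Learner) (H : Set Hyp) : Prop :=
  ∀ S : Sample, A S ∈ H ∧ ∀ h ∈ H, empError S (A S) ≤ empError S h

/-- `A` is an asymptotic ERM for `H`. -/
def IsAsymptoticERM (A : Learner) (H : Set Hyp) : Prop :=
  ProperFor A H ∧
  ∃ ε : ℕ → ℝ≥0∞, (∀ m, ε m ≤ 1) ∧ Tendsto ε atTop (nhds 0) ∧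
    ∀ S : Sample, empError S (A S) ≤ (⨅ h ∈ H, empError S h) + ε S.length

/-- `H` shatters the finite set `s`. -/
def Shatters (H : Set Hyp) (s : Finset ℕ) : Prop :=
  ∀ g : ℕ → Bool, ∃ h ∈ H, ∀ x ∈ s, h x = g x

/-- The VC dimension of `H` is at most `d`. -/
def VCDimAtMost (H : Set Hyp) (d : ℕ) : Prop :=
  ∀ s : Finset ℕ, Shatters H s → s.card ≤ d

/-- `H` has finite VC dimension. -/
def FiniteVCDim (H : Set Hyp) : Prop := ∃ d, VCDimAtMost H d

/-- `w` is a `k`-witness of VC dimension for `H`: on every increasing `(k+1)`-tuple it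
produces a Boolean `(k+1)`-tuple which is not the trace of any `h ∈ H` on the tuple. -/
def IsKWitness (k : ℕ) (w : List ℕ → List Bool) (H : Set Hyp) : Prop :=
  ∀ xs : List ℕ, xs.length = k + 1 → xs.Chain' (· < ·) →
    (w xs).length = k + 1 ∧ ∀ h ∈ H, xs.map h ≠ w xs

/-- The support of a hypothesis: `h⁻¹(1)`. -/
def hypSupport (h : Hyp) : Set ℕ := {x | h x = true}

/-- `h` is finitely supported. -/
def FinitelySupported (h : Hyp) : Prop := (hypSupport h).Finite

/-- The finitely supported hypothesis with support (the set of elements of) `l`. -/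
def listIndicator (l : List ℕ) : Hyp := fun x => decide (x ∈ l)

/-- A class of finitely supported hypotheses is decidable: there is an algorithm that,
given the support of a finitely supported `h` (as a list), decides whether `h ∈ H`. -/
def DecidableClass (H : Set Hyp) : Prop :=
  ∃ d : List ℕ → Bool, Computable d ∧ ∀ l : List ℕ, (d l = true ↔ listIndicator l ∈ H)

/-- `H` shatters the full binary tree of depth `d` whose node at binary path `p`
(with `|p| < d`) is labeled `t p`: every leaf (a binary path of length `d`) is reached
by some `h ∈ H`, going right at a node labeled `x` iff `h x = 1`. -/
def ShattersTree (H : Set Hyp) (d : ℕ) (t : List Bool → ℕ) : Prop :=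
  ∀ l : List Bool, l.length = d →
    ∃ h ∈ H, ∀ (i : ℕ) (hi : i < l.length), l[i] = h (t (l.take i))

/-! ### The class `𝓗_f` -/

/-- The `j`-th smallest element of the `k`-th block `I_k` of positive even numbers
(`1 ≤ j ≤ k`): `n_{kj} = k(k-1) + 2j`. -/
def nkj (k j : ℕ) : ℕ := k * (k - 1) + 2 * j

/-- The block `I_k` (of size `k`). -/
def Iblk (k : ℕ) : Finset ℕ := (Finset.Icc 1 k).image (nkj k)

/-- `h_{kj}`: the indicator of `I_k \ {n_{kj}}`. -/
def hkj (k j : ℕ) : Hyp := fun n => decide (n ∈ Iblk k ∧ n ≠ nkj k j)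

/-- `h_a`: the indicator of `I_{f(a)} ∪ {2a+1}`. -/
def hA (f : ℕ → ℕ) (a : ℕ) : Hyp := fun n => decide (n ∈ Iblk (f a) ∨ n = 2 * a + 1)

/-- The class `𝓗_f = {h_{kj} : 1 ≤ j ≤ k} ∪ {h_a : a ∈ ℕ}`. -/
def Hf (f : ℕ → ℕ) : Set Hyp :=
  {h | ∃ k j, 1 ≤ j ∧ j ≤ k ∧ h = hkj k j} ∪ {h | ∃ a, h = hA f a}

/-! ### Good hypotheses w.r.t. a witness -/

/-- `h` is good w.r.t. the `k`-witness `w`: it has finite support and disagrees with `w`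
on every increasing `(k+1)`-tuple lying strictly below `max supp(h)`. -/
def IsGood (k : ℕ) (w : List ℕ → List Bool) (h : Hyp) : Prop :=
  FinitelySupported h ∧
  ∀ xs : List ℕ, xs.length = k + 1 → xs.Chain' (· < ·) →
    (∀ x ∈ xs, x < sSup (hypSupport h)) → xs.map h ≠ w xs

/-- The set of good hypotheses w.r.t. `w`. -/
def Hgood (k : ℕ) (w : List ℕ → List Bool) : Set Hyp := {h | IsGood k w h}
namespace NoWit

open Nat.Partrec (Code)
open Nat.Partrec.Code
open Encodable Denumerable

def pt (a j : ℕ) : ℕ := 2 * Nat.pair a j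

def cpt (a t : ℕ) : ℕ := 2 * Nat.pair a t + 1

def tup (i k : ℕ) : List ℕ := (List.range (k + 1)).map (pt (Nat.pair i k))

def runs (i k t : ℕ) : Option ℕ :=
  if evaln t (ofNat Code i) (encode (tup i k)) = Option.none then
    evaln (t + 1) (ofNat Code i) (encode (tup i k))
  else Option.none

def sel (a k : ℕ) (v : List Bool) : List ℕ :=
  (List.range (k + 1)).flatMap fun j => if v.getD j false = true then [pt a j] else []

def suppL (i k t : ℕ) (v : List Bool) : List ℕ :=
  cpt (Nat.pair i k) t :: sel (Nat.pair i k) k v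

def hsup (i k t : ℕ) : Option (List ℕ) :=
  (runs i k t).bind fun r =>
    (decode (α := List Bool) r).bind fun v =>
      if v.length = k + 1 then some (suppL i k t v) else none

def Hdiag : Set Hyp := {h | ∃ i k t l, hsup i k t = some l ∧ h = listIndicator l}

def elt (a : ℕ) (s : List ℕ) : Bool := s.foldr (fun b r => (b == a) || r) false

def subB (s l : List ℕ) : Bool := s.foldr (fun b r => elt b l && r) true

def chk (x : ℕ) (l : List ℕ) : Bool :=
  match hsup (x / 2).unpair.1.unpair.1 (x / 2).unpair.1.unpair.2 (x / 2).unpair.2 with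
  | some s => subB l s && subB s l
  | none => false

def dcd (l : List ℕ) : Bool := l.foldr (fun x r => chk x l || r) false

/-! ### basic lemmas -/

theorem elt_eq {a : ℕ} {s : List ℕ} : elt a s = true ↔ a ∈ s := by
  induction s with
  | nil => simp [elt]
  | cons b s ih => simp [elt, List.foldr] at ih ⊢; rw [ih]; constructor <;> rintro (h | h) <;> simp [h]

theorem subB_eq {s l : List ℕ} : subB s l = true ↔ ∀ b ∈ s, b ∈ l := by
  induction s with
  | nil => simp [subB]
  | cons b s ih => simp [subB, List.foldr] at ih ⊢; rw [ih, elt_eq]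

theorem dcd_eq {l : List ℕ} : dcd l = true ↔ ∃ x ∈ l, chk x l = true := by
  suffices h : ∀ m : List ℕ, (m.foldr (fun x r => chk x l || r) false = true ↔ ∃ x ∈ m, chk x l = true) from h l
  intro m
  induction m with
  | nil => simp
  | cons b s ih => simp [List.foldr] at ih ⊢; rw [ih]

theorem mem_sel {a k : ℕ} {v : List Bool} {n : ℕ} :
    n ∈ sel a k v ↔ ∃ j, j < k + 1 ∧ v.getD j false = true ∧ n = pt a j := by
  simp only [sel, List.mem_flatMap, List.mem_range]
  constructor
  · rintro ⟨j, hj, hn⟩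
    by_cases h : v.getD j false = true
    · rw [if_pos h] at hn; simp at hn; exact ⟨j, hj, h, hn⟩
    · rw [if_neg h] at hn; simp at hn
  · rintro ⟨j, hj, h, rfl⟩
    refine ⟨j, hj, ?_⟩; rw [if_pos h]; simp

theorem pt_inj {a a' j j' : ℕ} (h : pt a j = pt a' j') : a = a' ∧ j = j' := by
  have : Nat.pair a j = Nat.pair a' j' := by unfold pt at h; omega
  exact Nat.pair_eq_pair.1 this

theorem cpt_ne_pt {a a' t j : ℕ} : cpt a t ≠ pt a' j := by
  unfold cpt pt; omega

theorem cpt_inj {a a' t t' : ℕ} (h : cpt a t = cpt a' t') : a = a' ∧ t = t' := by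
  have : Nat.pair a t = Nat.pair a' t' := by unfold cpt at h; omega
  exact Nat.pair_eq_pair.1 this

theorem runs_unique {i k t t' : ℕ} (h : runs i k t ≠ Option.none)
    (h' : runs i k t' ≠ Option.none) : t = t' := by
  by_contra hne
  wlog hlt : t < t' generalizing t t'
  · exact this h' h (Ne.symm hne) (by omega)
  unfold runs at h h'
  split at h
  · next he =>
    split at h'
    · next he' =>
      obtain ⟨r, hr⟩ := Option.ne_none_iff_exists'.1 h
      have : r ∈ evaln t' (ofNat Code i) (encode (tup i k)) :=
        evaln_mono (by omega) hr
      rw [he'] at this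
      simp at this
    · exact h' rfl
  · exact h rfl

theorem mem_suppL {i k t : ℕ} {v : List Bool} {n : ℕ} :
    n ∈ suppL i k t v ↔ n = cpt (Nat.pair i k) t ∨
      ∃ j, j < k + 1 ∧ v.getD j false = true ∧ n = pt (Nat.pair i k) j := by
  simp [suppL, mem_sel]

theorem listIndicator_eq_of_setEq {l l' : List ℕ} (h : ∀ n, n ∈ l ↔ n ∈ l') :
    listIndicator l = listIndicator l' := by
  funext n; simp [listIndicator, h n]

theorem tup_chain' (i k : ℕ) : (tup i k).Chain' (· < ·) := by
  unfold tup
  show List.IsChain _ _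
  rw [List.isChain_map, List.isChain_range_succ]
  intro m _
  have := Nat.pair_lt_pair_right (Nat.pair i k) (Nat.lt_succ_self m)
  unfold pt; omega

theorem tup_length (i k : ℕ) : (tup i k).length = k + 1 := by simp [tup]

theorem map_tup {i k t : ℕ} {v : List Bool} (hlen : v.length = k + 1) :
    (tup i k).map (listIndicator (suppL i k t v)) = v := by
  apply List.ext_getElem
  · simp [tup, hlen]
  · intro j h1 h2
    have hj : j < k + 1 := by simpa [tup] using h1
    simp only [tup, List.getElem_map, List.getElem_range]
    have hmem : pt (Nat.pair i k) j ∈ suppL i k t v ↔ v.getD j false = true := by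
      rw [mem_suppL]
      constructor
      · rintro (h | ⟨j', _, hv, hpt⟩)
        · exact absurd h.symm cpt_ne_pt
        · obtain ⟨-, rfl⟩ := pt_inj hpt; exact hv
      · intro h; exact Or.inr ⟨j, hj, h, rfl⟩
    have hgetD : v.getD j false = v[j] := List.getD_eq_getElem v false (by omega)
    have key : decide (pt (Nat.pair i k) j ∈ suppL i k t v) = v.getD j false := by
      cases hb : v.getD j false
      · simpa [hmem] using hb
      · simpa [hmem] using hb
    show decide (pt (Nat.pair i k) j ∈ suppL i k t v) = v[j]
    rw [key, hgetD]

end NoWit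

namespace NoWit

theorem pt_primrec : Primrec₂ pt :=
  (Primrec.nat_mul.comp (Primrec.const 2) Primrec₂.natPair).to₂

theorem cpt_primrec : Primrec₂ cpt :=
  (Primrec.succ.comp (Primrec.nat_mul.comp (Primrec.const 2) Primrec₂.natPair)).to₂

open Primrec in
theorem tup_primrec : Primrec₂ tup :=
  (list_map (list_range.comp (succ.comp snd))
    ((pt_primrec.comp (Primrec₂.natPair.comp (fst.comp fst) (snd.comp fst)) snd).to₂)).to₂

set_option maxHeartbeats 1000000 in
open Primrec Nat.Partrec.Code in
theorem runs_primrec : Primrec fun p : ℕ × ℕ × ℕ => runs p.1 p.2.1 p.2.2 := by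
  have hn : Primrec fun p : ℕ × ℕ × ℕ => Encodable.encode (tup p.1 p.2.1) :=
    Primrec.encode.comp (tup_primrec.comp fst (fst.comp snd))
  have hc : Primrec fun p : ℕ × ℕ × ℕ => Denumerable.ofNat Nat.Partrec.Code p.1 :=
    (Primrec.ofNat Nat.Partrec.Code).comp fst
  have ht : Primrec fun p : ℕ × ℕ × ℕ => p.2.2 := snd.comp snd
  have e1 : Primrec fun p : ℕ × ℕ × ℕ =>
      evaln p.2.2 (Denumerable.ofNat Nat.Partrec.Code p.1)
        (Encodable.encode (tup p.1 p.2.1)) :=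
    primrec_evaln.comp ((ht.pair hc).pair hn)
  have e2 : Primrec fun p : ℕ × ℕ × ℕ =>
      evaln (p.2.2 + 1) (Denumerable.ofNat Nat.Partrec.Code p.1)
        (Encodable.encode (tup p.1 p.2.1)) :=
    primrec_evaln.comp (((succ.comp ht).pair hc).pair hn)
  have hcond : PrimrecPred fun p : ℕ × ℕ × ℕ =>
      evaln p.2.2 (Denumerable.ofNat Nat.Partrec.Code p.1)
        (Encodable.encode (tup p.1 p.2.1)) = Option.none :=
    Primrec.eq.comp e1 (const Option.none)
  exact Primrec.ite hcond e2 (const Option.none)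

set_option maxHeartbeats 1000000 in
open Primrec in
theorem sel_primrec : Primrec fun q : (ℕ × ℕ) × List Bool => sel q.1.1 q.1.2 q.2 := by
  have hget : Primrec fun r : ((ℕ × ℕ) × List Bool) × ℕ => r.1.2.getD r.2 false :=
    (list_getD false).comp (snd.comp fst) snd
  have hcond : PrimrecPred fun r : ((ℕ × ℕ) × List Bool) × ℕ =>
      r.1.2.getD r.2 false = true :=
    Primrec.eq.comp hget (const true)
  have hpt : Primrec fun r : ((ℕ × ℕ) × List Bool) × ℕ => [pt r.1.1.1 r.2] :=
    list_cons.comp (pt_primrec.comp (fst.comp (fst.comp fst)) snd) (const [])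
  have hbody : Primrec fun r : ((ℕ × ℕ) × List Bool) × ℕ =>
      if r.1.2.getD r.2 false = true then [pt r.1.1.1 r.2] else [] :=
    Primrec.ite hcond hpt (const [])
  exact list_flatMap (list_range.comp (succ.comp (snd.comp fst))) hbody.to₂

set_option maxHeartbeats 1000000 in
open Primrec in
theorem suppL_primrec :
    Primrec fun p : (ℕ × ℕ × ℕ) × List Bool => suppL p.1.1 p.1.2.1 p.1.2.2 p.2 := by
  have hik : Primrec fun p : (ℕ × ℕ × ℕ) × List Bool => Nat.pair p.1.1 p.1.2.1 :=
    Primrec₂.natPair.comp (fst.comp fst) (fst.comp (snd.comp fst))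
  exact list_cons.comp (cpt_primrec.comp hik (snd.comp (snd.comp fst)))
    (sel_primrec.comp ((hik.pair (fst.comp (snd.comp fst))).pair snd))

set_option maxHeartbeats 1000000 in
open Primrec in
theorem hsup_primrec : Primrec fun p : ℕ × ℕ × ℕ => hsup p.1 p.2.1 p.2.2 := by
  have hcond : PrimrecPred fun r : ((ℕ × ℕ × ℕ) × ℕ) × List Bool =>
      r.2.length = r.1.1.2.1 + 1 :=
    Primrec.eq.comp (list_length.comp snd)
      (succ.comp (fst.comp (snd.comp (fst.comp fst))))
  have hsome : Primrec fun r : ((ℕ × ℕ × ℕ) × ℕ) × List Bool =>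
      some (suppL r.1.1.1 r.1.1.2.1 r.1.1.2.2 r.2) :=
    option_some.comp (suppL_primrec.comp ((fst.comp fst).pair snd))
  have inner2 : Primrec fun r : ((ℕ × ℕ × ℕ) × ℕ) × List Bool =>
      if r.2.length = r.1.1.2.1 + 1 then some (suppL r.1.1.1 r.1.1.2.1 r.1.1.2.2 r.2)
      else Option.none :=
    Primrec.ite hcond hsome (const Option.none)
  have hdec : Primrec fun q : (ℕ × ℕ × ℕ) × ℕ => Encodable.decode (α := List Bool) q.2 :=
    Primrec.decode.comp snd
  exact option_bind runs_primrec ((option_bind hdec inner2.to₂).to₂)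

open Primrec in
theorem elt_primrec : Primrec₂ elt :=
  (list_foldr (f := @Prod.snd ℕ (List ℕ)) snd (const false)
    ((Primrec.or.comp (Primrec.beq.comp (fst.comp snd) (fst.comp fst))
      (snd.comp snd)).to₂)).to₂

open Primrec in
theorem subB_primrec : Primrec₂ subB :=
  (list_foldr (f := @Prod.fst (List ℕ) (List ℕ)) fst (const true)
    ((Primrec.and.comp (elt_primrec.comp (fst.comp snd) (snd.comp fst))
      (snd.comp snd)).to₂)).to₂

set_option maxHeartbeats 1000000 in
open Primrec in
theorem chk_primrec : Primrec₂ chk := by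
  have hN : Primrec fun p : ℕ × List ℕ => p.1 / 2 := nat_div.comp fst (const 2)
  have hN1 : Primrec fun p : ℕ × List ℕ => (p.1 / 2).unpair.1 :=
    fst.comp (unpair.comp hN)
  have hi : Primrec fun p : ℕ × List ℕ => (p.1 / 2).unpair.1.unpair.1 :=
    fst.comp (unpair.comp hN1)
  have hk : Primrec fun p : ℕ × List ℕ => (p.1 / 2).unpair.1.unpair.2 :=
    snd.comp (unpair.comp hN1)
  have ht : Primrec fun p : ℕ × List ℕ => (p.1 / 2).unpair.2 :=
    snd.comp (unpair.comp hN)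
  have hh : Primrec fun p : ℕ × List ℕ =>
      hsup (p.1 / 2).unpair.1.unpair.1 (p.1 / 2).unpair.1.unpair.2 (p.1 / 2).unpair.2 :=
    hsup_primrec.comp (hi.pair (hk.pair ht))
  have hg : Primrec₂ fun (p : ℕ × List ℕ) (s : List ℕ) => subB p.2 s && subB s p.2 :=
    (Primrec.and.comp (subB_primrec.comp (snd.comp fst) snd)
      (subB_primrec.comp snd (snd.comp fst))).to₂
  have key : Primrec fun p : ℕ × List ℕ => chk p.1 p.2 :=
    Primrec.of_eq (option_casesOn hh (const false) hg) fun p => by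
      rcases h : hsup (p.1 / 2).unpair.1.unpair.1 (p.1 / 2).unpair.1.unpair.2
        (p.1 / 2).unpair.2 with - | s <;> simp [chk, h]
  exact key

set_option maxHeartbeats 1000000 in
open Primrec in
theorem dcd_primrec : Primrec dcd :=
  list_foldr (f := fun l : List ℕ => l) Primrec.id (const false)
    ((Primrec.or.comp (chk_primrec.comp (fst.comp snd) fst) (snd.comp snd)).to₂)

theorem dcd_computable : Computable dcd := dcd_primrec.to_comp

end NoWit

namespace NoWit

theorem hsup_eq_some {i k t : ℕ} {l : List ℕ} (h : hsup i k t = some l) :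
    ∃ r v, runs i k t = some r ∧ Encodable.decode (α := List Bool) r = some v ∧
      v.length = k + 1 ∧ l = suppL i k t v := by
  unfold hsup at h
  rcases hr : runs i k t with - | r <;> rw [hr] at h
  · simp at h
  rw [Option.bind_some] at h
  rcases hd : Encodable.decode (α := List Bool) r with - | v <;> rw [hd] at h
  · simp at h
  rw [Option.bind_some] at h
  by_cases hvl : v.length = k + 1
  · rw [if_pos hvl] at h
    exact ⟨r, v, rfl, hd, hvl, (Option.some.inj h).symm⟩
  · rw [if_neg hvl] at h; simp at h

theorem dcd_iff (l : List ℕ) : dcd l = true ↔ listIndicator l ∈ Hdiag := by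
  constructor
  · intro hd
    obtain ⟨x, hxl, hc⟩ := dcd_eq.1 hd
    unfold chk at hc
    rcases h : hsup (x / 2).unpair.1.unpair.1 (x / 2).unpair.1.unpair.2 (x / 2).unpair.2
      with - | s
    · rw [h] at hc
      exact absurd hc (by simp)
    · rw [h] at hc
      have hc' : (subB l s && subB s l) = true := hc
      rw [Bool.and_eq_true] at hc'
      have h1 := subB_eq.1 hc'.1
      have h2 := subB_eq.1 hc'.2
      exact ⟨_, _, _, s, h,
        listIndicator_eq_of_setEq fun n => ⟨fun hn => h1 n hn, fun hn => h2 n hn⟩⟩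
  · rintro ⟨i, k, t, l', hl', heq⟩
    have hsets : ∀ n, n ∈ l ↔ n ∈ l' := fun n => decide_eq_decide.1 (congrFun heq n)
    apply dcd_eq.2
    have hcl' : cpt (Nat.pair i k) t ∈ l' := by
      obtain ⟨r, v, hr, hdv, hvlen, rfl⟩ := hsup_eq_some hl'
      exact mem_suppL.2 (Or.inl rfl)
    refine ⟨cpt (Nat.pair i k) t, (hsets _).2 hcl', ?_⟩
    have hx2 : cpt (Nat.pair i k) t / 2 = Nat.pair (Nat.pair i k) t := by
      unfold cpt; omega
    unfold chk
    rw [hx2]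
    simp only [Nat.unpair_pair, hl']
    rw [Bool.and_eq_true]
    exact ⟨subB_eq.2 fun b hb => (hsets b).1 hb, subB_eq.2 fun b hb => (hsets b).2 hb⟩

end NoWit

/-- There is a decidable class of finitely supported hypotheses with
pairwise disjoint supports admitting no computable `k`-witness of VC dimension for any
`k ∈ ℕ`. -/
theorem exists_disjoint_supports_no_computable_witness :
    ∃ H : Set Hyp, DecidableClass H ∧ (∀ h ∈ H, FinitelySupported h) ∧
      (∀ h ∈ H, ∀ h' ∈ H, h ≠ h' → hypSupport h ∩ hypSupport h' = ∅) ∧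
      ∀ k : ℕ, ¬ ∃ w : List ℕ → List Bool, Computable w ∧ IsKWitness k w H := by
  classical
  refine ⟨NoWit.Hdiag, ⟨NoWit.dcd, NoWit.dcd_computable, NoWit.dcd_iff⟩, ?_, ?_, ?_⟩
  · rintro h ⟨i, k, t, l, hm, rfl⟩
    exact Set.Finite.subset l.finite_toSet fun x hx => of_decide_eq_true hx
  · rintro h ⟨i, k, t, l, hm, rfl⟩ h' ⟨i', k', t', l', hm', rfl⟩ hne
    obtain ⟨r, v, hr, hdv, hvlen, rfl⟩ := NoWit.hsup_eq_some hm
    obtain ⟨r', v', hr', hdv', hvlen', rfl⟩ := NoWit.hsup_eq_some hm'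
    ext n
    simp only [Set.mem_inter_iff, Set.mem_empty_iff_false, iff_false, not_and]
    intro hn hn'
    have h1 : n ∈ NoWit.suppL i k t v := by
      simpa [hypSupport, listIndicator] using hn
    have h2 : n ∈ NoWit.suppL i' k' t' v' := by
      simpa [hypSupport, listIndicator] using hn'
    rw [NoWit.mem_suppL] at h1 h2
    have hik : i = i' ∧ k = k' ∧ t = t' := by
      rcases h1 with h1 | ⟨j, _, _, h1⟩ <;> rcases h2 with h2 | ⟨j', _, _, h2⟩
      · obtain ⟨hik, ht⟩ := NoWit.cpt_inj (h1.symm.trans h2)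
        obtain ⟨hi, hk⟩ := Nat.pair_eq_pair.1 hik
        exact ⟨hi, hk, ht⟩
      · exact absurd (h1.symm.trans h2) NoWit.cpt_ne_pt
      · exact absurd (h2.symm.trans h1) NoWit.cpt_ne_pt
      · obtain ⟨hik, -⟩ := NoWit.pt_inj (h1.symm.trans h2)
        obtain ⟨hi, hk⟩ := Nat.pair_eq_pair.1 hik
        refine ⟨hi, hk, ?_⟩
        subst hi; subst hk
        exact NoWit.runs_unique (i := i) (k := k) (by simp [hr]) (by simp [hr'])
    obtain ⟨rfl, rfl, rfl⟩ := hik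
    exact hne (congrArg listIndicator (Option.some.inj (hm.symm.trans hm')))
  · rintro k ⟨w, hwc, hw⟩
    have hF : Computable fun n : ℕ =>
        Encodable.encode (w ((Encodable.decode (α := List ℕ) n).getD ([] : List ℕ))) :=
      Computable.encode.comp
        (hwc.comp (Computable.option_getD Computable.decode (Computable.const [])))
    obtain ⟨c, hc⟩ := Nat.Partrec.Code.exists_code.1 (Partrec.nat_iff.1 hF)
    obtain ⟨hwlen, hne⟩ :=
      hw (NoWit.tup (Encodable.encode c) k) (NoWit.tup_length _ k) (NoWit.tup_chain' _ k)
    have heval : Nat.Partrec.Code.eval c (Encodable.encode (NoWit.tup (Encodable.encode c) k)) =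
        Part.some (Encodable.encode (w (NoWit.tup (Encodable.encode c) k))) := by
      rw [hc]
      simp [PFun.coe_val, Encodable.encodek]
    have hmem : Encodable.encode (w (NoWit.tup (Encodable.encode c) k)) ∈
        Nat.Partrec.Code.eval c (Encodable.encode (NoWit.tup (Encodable.encode c) k)) := by
      rw [heval]; exact Part.mem_some _
    obtain ⟨s0, hs0⟩ := Nat.Partrec.Code.evaln_complete.1 hmem
    have hP : ∃ s, (Nat.Partrec.Code.evaln s c
        (Encodable.encode (NoWit.tup (Encodable.encode c) k))).isSome = true :=
      ⟨s0, by rw [Option.mem_def] at hs0; simp [hs0]⟩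
    have ht0 := Nat.find_spec hP
    have ht0pos : Nat.find hP ≠ 0 := by
      intro h0
      obtain ⟨r0, hr0⟩ := Option.isSome_iff_exists.1 ht0
      have := Nat.Partrec.Code.evaln_bound (k := Nat.find hP)
        (n := Encodable.encode (NoWit.tup (Encodable.encode c) k)) (c := c) (x := r0)
        (by rw [Option.mem_def]; exact hr0)
      omega
    obtain ⟨t, htt⟩ : ∃ t, Nat.find hP = t + 1 := ⟨Nat.find hP - 1, by omega⟩
    have htnone : Nat.Partrec.Code.evaln t c
        (Encodable.encode (NoWit.tup (Encodable.encode c) k)) = Option.none := by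
      have := Nat.find_min hP (m := t) (by omega)
      simpa [Option.not_isSome_iff_eq_none] using this
    rw [htt] at ht0
    obtain ⟨r, hr⟩ := Option.isSome_iff_exists.1 ht0
    have hrval : r = Encodable.encode (w (NoWit.tup (Encodable.encode c) k)) := by
      have hre := Nat.Partrec.Code.evaln_sound (x := r)
        (by rw [Option.mem_def]; exact hr)
      rw [heval] at hre
      exact Part.mem_some_iff.1 hre
    have hruns : NoWit.runs (Encodable.encode c) k t =
        some (Encodable.encode (w (NoWit.tup (Encodable.encode c) k))) := by
      unfold NoWit.runs
      rw [Denumerable.ofNat_encode]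
      rw [if_pos htnone, hr, hrval]
    have hsupSome : NoWit.hsup (Encodable.encode c) k t =
        some (NoWit.suppL (Encodable.encode c) k t (w (NoWit.tup (Encodable.encode c) k))) := by
      unfold NoWit.hsup
      rw [hruns, Option.bind_some, Encodable.encodek, Option.bind_some, if_pos hwlen]
    exact hne _ ⟨_, _, _, _, hsupSome, rfl⟩ (NoWit.map_tup hwlen)
end

section
/- Let 𝓗 ⊆ {0,1}^ℕ be a hypothesis class, k ∈ ℕ, and let w be a k-witness of VC dimension for 𝓗. Let 𝓗_good be the set of all good functions with respect to w. Then the VC dimension of 𝓗 ∪ 𝓗_good is at most k+1; in fact, for all x_1 < … < x_{k+2}, no h ∈ 𝓗 ∪ 𝓗_good satisfies (h(x_1),…,h(x_{k+1})) = w(x_1,…,x_{k+1}) and h(x_{k+2}) = 1. -/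
open Filter
open scoped ENNReal

lemma key_lemma (H : Set Hyp) (k : ℕ) (w : List ℕ → List Bool)
    (hw : IsKWitness k w H) :
    ∀ (xs : List ℕ) (y : ℕ), xs.length = k + 1 → (xs ++ [y]).Chain' (· < ·) →
      ∀ h ∈ H ∪ Hgood k w, ¬ (xs.map h = w xs ∧ h y = true) := by
  intro xs y hlen hchain h hmem ⟨heq, hy⟩
  have hpw : (xs ++ [y]).Pairwise (· < ·) := List.isChain_iff_pairwise.mp hchain
  rw [List.pairwise_append] at hpw
  obtain ⟨hpxs, -, hlt⟩ := hpw
  have hxchain : xs.Chain' (· < ·) := List.isChain_iff_pairwise.mpr hpxs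
  rcases hmem with hH | hG
  · exact (hw xs hlen hxchain).2 h hH heq
  · obtain ⟨hfin, hgood⟩ := hG
    have hyS : y ∈ hypSupport h := hy
    have hySup : y ≤ sSup (hypSupport h) := le_csSup hfin.bddAbove hyS
    refine hgood xs hlen hxchain (fun x hx => lt_of_lt_of_le ?_ hySup) heq
    exact hlt x hx y (by simp)

/-- If `w` is a `k`-witness of VC dimension for `H`, then the VC
dimension of `H ∪ 𝓗_good` is at most `k+1`; in fact, for all `x₁ < … < x_{k+2}`, no
`h ∈ H ∪ 𝓗_good` satisfies `(h(x₁),…,h(x_{k+1})) = w(x₁,…,x_{k+1})` and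
`h(x_{k+2}) = 1`. -/
theorem VCdim_union_good_le (H : Set Hyp) (k : ℕ) (w : List ℕ → List Bool)
    (hw : IsKWitness k w H) :
    VCDimAtMost (H ∪ Hgood k w) (k + 1) ∧
    ∀ (xs : List ℕ) (y : ℕ), xs.length = k + 1 → (xs ++ [y]).Chain' (· < ·) →
      ∀ h ∈ H ∪ Hgood k w, ¬ (xs.map h = w xs ∧ h y = true) := by
  refine ⟨?_, key_lemma H k w hw⟩
  intro s hs
  by_contra hcard
  push_neg at hcard
  -- sorted list of s
  set l := s.sort (· ≤ ·) with hl
  have hsort : l.Pairwise (· < ·) := s.sortedLT_sort.pairwise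
  have hlenl : l.length = s.card := s.length_sort _
  have hkk : k + 2 ≤ l.length := by omega
  set xs := l.take (k + 1) with hxs
  have hlenxs : xs.length = k + 1 := by
    rw [hxs, List.length_take]; omega
  have hyidx : k + 1 < l.length := by omega
  set y := l[k + 1] with hy
  have happ : xs ++ [y] = l.take (k + 2) := by
    rw [hxs, hy]
    rw [← List.take_concat_get hyidx, List.concat_eq_append]
  have hchain : (xs ++ [y]).Chain' (· < ·) := by
    rw [happ]
    exact List.isChain_iff_pairwise.mpr ((hsort).sublist (List.take_sublist _ _))
  have hwlen : (w xs).length = k + 1 := by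
    refine (hw xs hlenxs ?_).1
    have := List.isChain_iff_pairwise.mp hchain
    rw [List.pairwise_append] at this
    exact List.isChain_iff_pairwise.mpr this.1
  have hnodup : l.Nodup := s.sort_nodup _
  have hndxs : xs.Nodup := hnodup.sublist (List.take_sublist _ _)
  -- the adversarial labeling
  set g : ℕ → Bool := fun x => (w xs).getD (xs.idxOf x) true with hg
  obtain ⟨h, hmem, hagree⟩ := hs g
  have hxs_mem : ∀ x ∈ xs, x ∈ s := by
    intro x hx
    have : x ∈ l := List.mem_of_mem_take hx
    rwa [hl, Finset.mem_sort] at this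
  have hys : y ∈ s := by
    have : y ∈ l := List.getElem_mem hyidx
    rwa [hl, Finset.mem_sort] at this
  have hynotxs : y ∉ xs := by
    intro hyx
    have hpw := List.isChain_iff_pairwise.mp hchain
    rw [List.pairwise_append] at hpw
    exact lt_irrefl y (hpw.2.2 y hyx y (by simp))
  refine key_lemma H k w hw xs y hlenxs hchain h hmem ⟨?_, ?_⟩
  · refine List.ext_getElem (by simp [hlenxs, hwlen]) ?_
    intro i hi1 hi2
    rw [List.getElem_map]
    rw [hagree _ (hxs_mem _ (List.getElem_mem (by simpa using hi1)))]
    have : xs.idxOf xs[i] = i := hndxs.idxOf_getElem _ _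
    rw [hg]
    simp only [this]
    exact List.getD_eq_getElem _ _ hi2
  · rw [hagree y hys, hg]
    simp only
    rw [List.idxOf_eq_length hynotxs, hlenxs]
    exact List.getD_eq_default _ _ (by omega)
end

section
/- Let 𝓗 ⊆ {0,1}^ℕ be a hypothesis class, k ∈ ℕ, and let w be a computable k-witness of VC dimension for 𝓗. Let 𝓗_good be the set of all good functions with respect to w. Then the class 𝓗 ∪ 𝓗_good has a computable ERM. -/
open Filter
open scoped ENNReal

namespace UGaux

/-! ### Basic combinatorial definitions -/

/-- Max of a list of naturals (0 for empty). -/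
def maxL (l : List ℕ) : ℕ := l.foldr max 0

/-- Max of the first components of a sample. -/
def maxFst (S : Sample) : ℕ := S.foldr (fun p m => max p.1 m) 0

/-- All sublists of a list. -/
def subs : List ℕ → List (List ℕ)
  | [] => [[]]
  | a :: t => subs t ++ (subs t).map (a :: ·)

/-- All increasing `(k+1)`-tuples with entries `< n`. -/
def tuples (k n : ℕ) : List (List ℕ) :=
  (subs (List.range n)).filter (fun xs => xs.length == k + 1)

/-- Goodness check for `listIndicator l`. -/
def goodB (k : ℕ) (w : List ℕ → List Bool) (l : List ℕ) : Bool :=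
  (tuples k (maxL l)).all fun xs => !decide (xs.map (listIndicator l) = w xs)

/-- Number of mistakes of `listIndicator l` on sample `S`. -/
def errC (S : Sample) (l : List ℕ) : ℕ := S.countP fun p => listIndicator l p.1 != p.2

/-- Pick the list minimizing `errC` among `[] :: cs`. -/
def best (S : Sample) (cs : List (List ℕ)) : List ℕ :=
  cs.foldl (fun b l => if errC S l < errC S b then l else b) []

/-- Good candidate supports for sample `S`. -/
def cands (k : ℕ) (w : List ℕ → List Bool) (S : Sample) : List (List ℕ) :=
  (subs (List.range (maxFst S + 2))).filter (goodB k w)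

def bestL (k : ℕ) (w : List ℕ → List Bool) (S : Sample) : List ℕ :=
  best S (cands k w S)

/-- The computable ERM learner. -/
def ALearn (k : ℕ) (w : List ℕ → List Bool) : Learner :=
  fun S => listIndicator (bestL k w S)

/-! ### Math lemmas -/

theorem le_maxL {x : ℕ} {l : List ℕ} (h : x ∈ l) : x ≤ maxL l := by
  induction l with
  | nil => simp at h
  | cons a t ih =>
    rcases List.mem_cons.1 h with rfl | h
    · exact le_max_left _ _
    · exact le_trans (ih h) (le_max_right _ _)

theorem maxL_mem {l : List ℕ} (h : l ≠ []) : maxL l ∈ l := by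
  induction l with
  | nil => simp at h
  | cons a t ih =>
    rcases eq_or_ne t [] with rfl | ht
    · simp [maxL]
    · rcases max_choice a (maxL t) with h' | h' <;>
        simp only [maxL, List.foldr_cons] at h' ⊢ <;> rw [h']
      · exact List.mem_cons_self
      · exact List.mem_cons_of_mem _ (ih ht)

theorem maxL_eq {l : List ℕ} {a : ℕ} (hmem : a ∈ l) (hub : ∀ x ∈ l, x ≤ a) : maxL l = a :=
  le_antisymm (hub _ (maxL_mem (List.ne_nil_of_mem hmem))) (le_maxL hmem)

theorem supp_listIndicator (l : List ℕ) : hypSupport (listIndicator l) = {x | x ∈ l} := by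
  ext x; simp [hypSupport, listIndicator]

theorem finSupp_listIndicator (l : List ℕ) : FinitelySupported (listIndicator l) := by
  rw [FinitelySupported, supp_listIndicator]
  exact l.finite_toSet

theorem sSup_supp_listIndicator (l : List ℕ) :
    sSup (hypSupport (listIndicator l)) = maxL l := by
  rw [supp_listIndicator]
  rcases eq_or_ne l [] with rfl | hl
  · simp [maxL, csSup_empty]
  · refine le_antisymm (csSup_le ⟨maxL l, maxL_mem hl⟩ fun x hx => le_maxL hx) ?_
    exact le_csSup (l.finite_toSet.bddAbove) (maxL_mem hl)

theorem mem_subs {l' l : List ℕ} : l' ∈ subs l ↔ l'.Sublist l := by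
  induction l generalizing l' with
  | nil => simp [subs]
  | cons a t ih =>
    simp only [subs, List.mem_append, List.mem_map, ih, List.sublist_cons_iff]
    constructor
    · rintro (h | ⟨r, hr, rfl⟩)
      · exact Or.inl h
      · exact Or.inr ⟨r, rfl, hr⟩
    · rintro (h | ⟨r, rfl, hr⟩)
      · exact Or.inl h
      · exact Or.inr ⟨r, hr, rfl⟩

theorem sublist_range_iff {xs : List ℕ} {n : ℕ} :
    xs.Sublist (List.range n) ↔ xs.Chain' (· < ·) ∧ ∀ x ∈ xs, x < n := by
  constructor
  · intro h
    exact ⟨((List.pairwise_lt_range (n := n)).sublist h).isChain,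
      fun x hx => List.mem_range.1 (h.subset hx)⟩
  · rintro ⟨hc, hb⟩
    have hp : xs.Pairwise (· < ·) := List.isChain_iff_pairwise.1 hc
    have hxs : xs = (List.range n).filter (fun y => decide (y ∈ xs)) := by
      refine (fun hp h1 h2 => List.Perm.eq_of_pairwise' (r := (· ≤ ·)) h1 h2 hp) ?_ ?_ ?_
      · refine (List.perm_ext_iff_of_nodup (hp.imp fun h => ne_of_lt h)
          ((List.nodup_range (n := n)).filter _)).2 fun y => ?_
        simp only [List.mem_filter, List.mem_range, decide_eq_true_eq]
        exact ⟨fun hy => ⟨hb y hy, hy⟩, fun hy => hy.2⟩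
      · exact hp.imp fun h => le_of_lt h
      · exact ((List.pairwise_lt_range (n := n)).filter _).imp fun h => le_of_lt h
    rw [hxs]
    exact List.filter_sublist

theorem mem_tuples {k n : ℕ} {xs : List ℕ} :
    xs ∈ tuples k n ↔ xs.length = k + 1 ∧ xs.Chain' (· < ·) ∧ ∀ x ∈ xs, x < n := by
  simp only [tuples, List.mem_filter, mem_subs, sublist_range_iff, beq_iff_eq]
  constructor
  · rintro ⟨⟨hc, hb⟩, hlen⟩; exact ⟨hlen, hc, hb⟩
  · rintro ⟨hlen, hc, hb⟩; exact ⟨⟨hc, hb⟩, hlen⟩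

theorem goodB_iff (k : ℕ) (w : List ℕ → List Bool) (l : List ℕ) :
    goodB k w l = true ↔ listIndicator l ∈ Hgood k w := by
  simp only [goodB, List.all_eq_true, Hgood, IsGood, Set.mem_setOf_eq, Bool.not_eq_true',
    decide_eq_false_iff_not, ne_eq]
  constructor
  · intro hall
    refine ⟨finSupp_listIndicator l, fun xs hlen hch hbd => ?_⟩
    rw [sSup_supp_listIndicator] at hbd
    exact hall xs (mem_tuples.2 ⟨hlen, hch, hbd⟩)
  · rintro ⟨-, hgood⟩ xs hxs
    obtain ⟨hlen, hch, hbd⟩ := mem_tuples.1 hxs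
    exact hgood xs hlen hch (by rw [sSup_supp_listIndicator]; exact hbd)

theorem goodB_nil (k : ℕ) (w : List ℕ → List Bool) : goodB k w [] = true := by
  have : tuples k (maxL []) = [] := by
    simp only [maxL, List.foldr_nil, tuples, List.range_zero, subs]
    simp
  simp [goodB, this]

theorem nil_mem_cands (k : ℕ) (w : List ℕ → List Bool) (S : Sample) :
    [] ∈ cands k w S :=
  List.mem_filter.2 ⟨mem_subs.2 (List.nil_sublist _), goodB_nil k w⟩

theorem fst_le_maxFst {S : Sample} {p : ℕ × Bool} (h : p ∈ S) : p.1 ≤ maxFst S := by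
  induction S with
  | nil => simp at h
  | cons q t ih =>
    rcases List.mem_cons.1 h with rfl | h
    · exact le_max_left _ _
    · exact le_trans (ih h) (le_max_right _ _)

/-- Generic specification of the minimizing fold. -/
theorem best_spec (S : Sample) (cs : List (List ℕ)) :
    (best S cs = [] ∨ best S cs ∈ cs) ∧ ∀ l ∈ cs, errC S (best S cs) ≤ errC S l := by
  suffices h : ∀ (cs : List (List ℕ)) (b₀ : List ℕ),
      ((cs.foldl (fun b l => if errC S l < errC S b then l else b) b₀ = b₀ ∨
        cs.foldl (fun b l => if errC S l < errC S b then l else b) b₀ ∈ cs)) ∧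
      errC S (cs.foldl (fun b l => if errC S l < errC S b then l else b) b₀) ≤ errC S b₀ ∧
      ∀ l ∈ cs, errC S (cs.foldl (fun b l => if errC S l < errC S b then l else b) b₀) ≤ errC S l by
    obtain ⟨h1, _, h3⟩ := h cs []
    exact ⟨h1, h3⟩
  intro cs
  induction cs with
  | nil => intro b₀; simp
  | cons c t ih =>
    intro b₀
    simp only [List.foldl_cons]
    obtain ⟨ih1, ih2, ih3⟩ := ih (if errC S c < errC S b₀ then c else b₀)
    constructor
    · rcases ih1 with h | h
      · rw [h]
        split
        · exact Or.inr List.mem_cons_self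
        · exact Or.inl rfl
      · exact Or.inr (List.mem_cons_of_mem _ h)
    constructor
    · refine le_trans ih2 ?_
      split <;> omega
    · intro l hl
      rcases List.mem_cons.1 hl with rfl | hl
      · refine le_trans ih2 ?_
        split <;> omega
      · exact ih3 l hl

theorem errC_eq_countP {S : Sample} {l : List ℕ} {h : Hyp}
    (hag : ∀ x ≤ maxFst S, listIndicator l x = h x) :
    errC S l = S.countP fun p => h p.1 != p.2 := by
  refine List.countP_congr fun p hp => ?_
  rw [hag p.1 (fst_le_maxFst hp)]

theorem listIndicator_eq {l : List ℕ} {h : Hyp} {x : ℕ} (hiff : x ∈ l ↔ h x = true) :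
    listIndicator l x = h x := by
  simp [listIndicator, hiff]

theorem truncate_iff {M : ℕ} {h : Hyp} {x : ℕ} (hx : x ≤ M) :
    (x ∈ ((List.range (M + 1)).filter (fun x => h x)) ++ [M + 1]) ↔ h x = true := by
  simp only [List.mem_append, List.mem_filter, List.mem_range, List.mem_singleton]
  constructor
  · rintro (⟨-, hx⟩ | rfl)
    · exact hx
    · omega
  · intro hx'; exact Or.inl ⟨by omega, hx'⟩

/-- Truncation: from any hypothesis avoiding `w` on tuples below `M+1`,
produce a good candidate list agreeing with it up to `M`. -/
theorem truncate_mem_cands (k : ℕ) (w : List ℕ → List Bool) (S : Sample) (h : Hyp)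
    (P : ∀ xs : List ℕ, xs.length = k + 1 → xs.Chain' (· < ·) →
      (∀ x ∈ xs, x ≤ maxFst S) → xs.map h ≠ w xs) :
    ∃ l ∈ cands k w S, ∀ x ≤ maxFst S, listIndicator l x = h x := by
  set M := maxFst S with hM
  refine ⟨((List.range (M + 1)).filter (fun x => h x)) ++ [M + 1], ?_, ?_⟩
  · refine List.mem_filter.2 ⟨mem_subs.2 ?_, ?_⟩
    · have h1 : ((List.range (M + 1)).filter (fun x => h x)).Sublist (List.range (M + 1)) :=
        List.filter_sublist
      have h2 : List.range (M + 2) = List.range (M + 1) ++ [M + 1] := List.range_succ (n := M + 1)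
      rw [h2]
      exact h1.append (List.Sublist.refl _)
    · -- goodness
      have hmax : maxL (((List.range (M + 1)).filter (fun x => h x)) ++ [M + 1]) = M + 1 := by
        refine maxL_eq (by simp) fun x hx => ?_
        rcases List.mem_append.1 hx with hx | hx
        · have := List.mem_range.1 (List.mem_of_mem_filter hx)
          omega
        · simp at hx; omega
      rw [goodB, hmax, List.all_eq_true]
      intro xs hxs
      obtain ⟨hlen, hch, hbd⟩ := mem_tuples.1 hxs
      simp only [Bool.not_eq_true', decide_eq_false_iff_not]
      have hag : ∀ x ∈ xs, listIndicator (((List.range (M + 1)).filter (fun x => h x)) ++ [M + 1]) x = h x := by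
        intro x hx
        have hxM : x ≤ M := by have := hbd x hx; omega
        exact listIndicator_eq (truncate_iff hxM)
      rw [List.map_congr_left hag]
      exact P xs hlen hch fun x hx => by have := hbd x hx; omega
  · intro x hx
    exact listIndicator_eq (truncate_iff hx)

theorem exists_cand {H : Set Hyp} {k : ℕ} {w : List ℕ → List Bool}
    (hwit : IsKWitness k w H) (S : Sample) {h : Hyp} (hh : h ∈ H ∪ Hgood k w) :
    ∃ l ∈ cands k w S, errC S l = S.countP fun p => h p.1 != p.2 := by
  rcases hh with hh | hh
  · obtain ⟨l, hl, hag⟩ := truncate_mem_cands k w S h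
      (fun xs hlen hch _ => (hwit xs hlen hch).2 h hh)
    exact ⟨l, hl, errC_eq_countP hag⟩
  · rcases le_or_gt (sSup (hypSupport h)) (maxFst S) with hle | hgt
    · -- h has small support: take l = filter of range
      set M := maxFst S with hM
      have heq : listIndicator ((List.range (M + 1)).filter (fun x => h x)) = h := by
        funext x
        refine listIndicator_eq ?_
        simp only [List.mem_filter, List.mem_range, decide_eq_true_eq]
        rcases le_or_gt x M with hxM | hxM
        · exact ⟨fun hx => hx.2, fun hx => ⟨by omega, hx⟩⟩
        · have hfalse : h x = false := by
            by_contra hc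
            have hx : x ∈ hypSupport h := by
              simpa [hypSupport] using Bool.not_eq_false _ |>.symm ▸ (by
                revert hc; cases h x <;> simp)
            have := le_csSup hh.1.bddAbove hx
            omega
          constructor
          · rintro ⟨hlt, -⟩; omega
          · intro hx; rw [hfalse] at hx; exact absurd hx (by simp)
      refine ⟨(List.range (M + 1)).filter (fun x => h x), ?_, ?_⟩
      · refine List.mem_filter.2 ⟨mem_subs.2 ?_, ?_⟩
        · exact List.filter_sublist.trans
            (by rw [List.range_succ (n := M + 1)]; exact List.sublist_append_left _ _)
        · rw [goodB_iff, heq]; exact hh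
      · exact errC_eq_countP fun x _ => by rw [heq]
    · obtain ⟨l, hl, hag⟩ := truncate_mem_cands k w S h
        (fun xs hlen hch hbd =>
          hh.2 xs hlen hch fun x hx => lt_of_le_of_lt (hbd x hx) hgt)
      exact ⟨l, hl, errC_eq_countP hag⟩

theorem ALearn_isERM {H : Set Hyp} {k : ℕ} {w : List ℕ → List Bool}
    (hwit : IsKWitness k w H) : IsERM (ALearn k w) (H ∪ Hgood k w) := by
  intro S
  obtain ⟨hbmem, hbmin⟩ := best_spec S (cands k w S)
  have hgood : goodB k w (bestL k w S) = true := by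
    rcases hbmem with h | h
    · rw [bestL, h]; exact goodB_nil k w
    · exact (List.mem_filter.1 h).2
  constructor
  · exact Or.inr ((goodB_iff k w _).1 hgood)
  · intro h hh
    obtain ⟨l, hl, herr⟩ := exists_cand hwit S hh
    have hle : errC S (bestL k w S) ≤ S.countP fun p => h p.1 != p.2 := herr ▸ hbmin l hl
    have : empError S (ALearn k w S) =
        ((errC S (bestL k w S) : ℕ) : ℝ≥0∞) / (S.length : ℝ≥0∞) := rfl
    rw [this, empError]
    exact ENNReal.div_le_div_right (by exact_mod_cast hle) _

/-! ### Computability -/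

section ComputableCombinators

variable {α β σ : Type*} [Primcodable α] [Primcodable β] [Primcodable σ]


theorem clist_foldl {f : α → List β} {g : α → σ} {h : α → σ × β → σ}
    (hf : Computable f) (hg : Computable g) (hh : Computable₂ h) :
    Computable fun a => (f a).foldl (fun s b => h a (s, b)) (g a) := by
  have key : ∀ (a : α) (n : ℕ),
      Nat.rec (motive := fun _ => σ) (g a)
        (fun y IH => (fun p : ℕ × σ => Option.casesOn ((f a)[p.1]?) p.2 (fun b => h a (p.2, b))) (y, IH)) n
      = ((f a).take n).foldl (fun s b => h a (s, b)) (g a) := by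
    intro a n
    induction n with
    | zero => simp
    | succ n ih =>
      rw [List.take_succ]
      cases hx : (f a)[n]? <;> simp [ih, hx, List.foldl_append]
  have hcomp : Computable fun a =>
      Nat.rec (motive := fun _ => σ) (g a)
        (fun y IH => (fun p : ℕ × σ => Option.casesOn ((f a)[p.1]?) p.2 (fun b => h a (p.2, b))) (y, IH))
        ((f a).length) := by
    refine Computable.nat_rec (h := fun a p => Option.casesOn ((f a)[p.1]?) p.2 (fun b => h a (p.2, b)))
      (Computable.list_length.comp hf) hg ?_
    refine Computable₂.mk ?_
    exact Computable.option_casesOn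
      (Primrec.list_getElem?.to_comp.comp (hf.comp Computable.fst)
        (Computable.fst.comp Computable.snd))
      (Computable.snd.comp Computable.snd)
      (hh.comp (Computable.fst.comp Computable.fst)
        (Computable.pair (Computable.snd.comp (Computable.snd.comp Computable.fst))
          Computable.snd))
  exact hcomp.of_eq fun a => by rw [key a (f a).length, List.take_length]

theorem clist_foldr {f : α → List β} {g : α → σ} {h : α → β × σ → σ}
    (hf : Computable f) (hg : Computable g) (hh : Computable₂ h) :
    Computable fun a => (f a).foldr (fun b s => h a (b, s)) (g a) :=
  (clist_foldl (h := fun a p => h a (p.2, p.1)) (Computable.list_reverse.comp hf) hg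
    (Computable₂.mk (hh.comp Computable.fst
      (Computable.pair (Computable.snd.comp Computable.snd)
        (Computable.fst.comp Computable.snd))))).of_eq fun a => by
    rw [List.foldl_reverse]


theorem clist_map {f : α → List β} {g : α → β → σ}
    (hf : Computable f) (hg : Computable₂ g) :
    Computable fun a => (f a).map (g a) :=
  (clist_foldr (h := fun a p => g a p.1 :: p.2) hf (Computable.const [])
    (Computable₂.mk (Computable.list_cons.comp
      (hg.comp Computable.fst (Computable.fst.comp Computable.snd))
      (Computable.snd.comp Computable.snd)))).of_eq fun a => by
    induction f a <;> simp [*]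

theorem clist_filter {f : α → List β} {p : α → β → Bool}
    (hf : Computable f) (hp : Computable₂ p) :
    Computable fun a => (f a).filter (p a) :=
  (clist_foldr (h := fun a q => cond (p a q.1) (q.1 :: q.2) q.2) hf (Computable.const [])
    (Computable₂.mk (Computable.cond
      (hp.comp Computable.fst (Computable.fst.comp Computable.snd))
      (Computable.list_cons.comp (Computable.fst.comp Computable.snd)
        (Computable.snd.comp Computable.snd))
      (Computable.snd.comp Computable.snd)))).of_eq fun a => by
    induction f a with
    | nil => simp
    | cons b t ih => rw [List.foldr_cons, ih, List.filter_cons]; cases p a b <;> simp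

theorem clist_all {f : α → List β} {p : α → β → Bool}
    (hf : Computable f) (hp : Computable₂ p) :
    Computable fun a => (f a).all (p a) :=
  (clist_foldr (h := fun a q => cond (p a q.1) q.2 false) hf (Computable.const true)
    (Computable₂.mk (Computable.cond
      (hp.comp Computable.fst (Computable.fst.comp Computable.snd))
      (Computable.snd.comp Computable.snd)
      (Computable.const false)))).of_eq fun a => by
    induction f a with
    | nil => simp
    | cons b t ih => rw [List.foldr_cons, ih, List.all_cons]; cases p a b <;> simp

theorem clist_countP {f : α → List β} {p : α → β → Bool}
    (hf : Computable f) (hp : Computable₂ p) :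
    Computable fun a => (f a).countP (p a) :=
  (clist_foldr (h := fun a q => cond (p a q.1) (q.2 + 1) q.2) hf (Computable.const 0)
    (Computable₂.mk (Computable.cond
      (hp.comp Computable.fst (Computable.fst.comp Computable.snd))
      (Computable.succ.comp (Computable.snd.comp Computable.snd))
      (Computable.snd.comp Computable.snd)))).of_eq fun a => by
    induction f a with
    | nil => simp
    | cons b t ih => rw [List.foldr_cons, ih, List.countP_cons]; cases hpb : p a b <;> simp [hpb]

theorem cmem : Computable₂ fun (l : List ℕ) (x : ℕ) => decide (x ∈ l) :=
  Computable₂.mk <|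
  (clist_foldr (f := fun q : List ℕ × ℕ => q.1) (g := fun _ => false)
    (h := fun q r => cond (r.1 == q.2) true r.2)
    Computable.fst (Computable.const false)
    (Computable₂.mk (Computable.cond
      (Primrec.beq.to_comp.comp (Computable.fst.comp Computable.snd)
        (Computable.snd.comp Computable.fst))
      (Computable.const true)
      (Computable.snd.comp Computable.snd)))).of_eq fun q => by
    induction q.1 with
    | nil => simp
    | cons b t ih =>
      rw [List.foldr_cons, ih]
      by_cases hb : b = q.2
      · subst hb; simp [List.mem_cons]
      · have h1 : (b == q.2) = false := by simp [hb]
        have h2 : decide (q.2 ∈ b :: t) = decide (q.2 ∈ t) := by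
          refine decide_eq_decide.2 ⟨fun h => ?_, fun h => List.mem_cons_of_mem _ h⟩
          rcases List.mem_cons.1 h with h | h
          · exact absurd h.symm hb
          · exact h
        simp only [h1, cond_false, h2]

end ComputableCombinators

theorem cmaxL : Computable maxL :=
  (clist_foldr (f := fun l : List ℕ => l) (g := fun _ => 0)
      (h := fun _ p => max p.1 p.2) Computable.id (Computable.const 0)
      (Computable₂.mk (Primrec.nat_max.to_comp.comp
        (Computable.fst.comp Computable.snd) (Computable.snd.comp Computable.snd)))).of_eq
    fun l => rfl

theorem cmaxFst : Computable maxFst :=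
  (clist_foldr (f := fun S : Sample => S) (g := fun _ => 0)
      (h := fun _ p => max p.1.1 p.2) Computable.id (Computable.const 0)
      (Computable₂.mk (Primrec.nat_max.to_comp.comp
        (Computable.fst.comp (Computable.fst.comp Computable.snd))
        (Computable.snd.comp Computable.snd)))).of_eq
    fun S => rfl

theorem csubs : Computable subs := by
  have step : Computable₂ fun (_ : List ℕ) (p : ℕ × List (List ℕ)) =>
      p.2 ++ p.2.map (p.1 :: ·) := by
    refine Computable₂.mk ?_
    refine Computable.list_append.comp (Computable.snd.comp Computable.snd) ?_
    exact clist_map (f := fun q : List ℕ × (ℕ × List (List ℕ)) => q.2.2)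
      (g := fun q x => q.2.1 :: x)
      (Computable.snd.comp Computable.snd)
      (Computable₂.mk (Computable.list_cons.comp
        (Computable.fst.comp (Computable.snd.comp Computable.fst)) Computable.snd))
  refine (clist_foldr (f := fun l : List ℕ => l) (g := fun _ => [[]])
      (h := fun _ p => p.2 ++ p.2.map (p.1 :: ·)) Computable.id (Computable.const [[]])
      step).of_eq fun l => ?_
  induction l with
  | nil => rfl
  | cons a t ih => simp only [List.foldr_cons, ih, subs]

theorem ctuples (k : ℕ) : Computable (tuples k) :=
  clist_filter (f := fun n => subs (List.range n)) (p := fun _ xs => xs.length == k + 1)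
    (csubs.comp Primrec.list_range.to_comp)
    (Computable₂.mk (Primrec.beq.to_comp.comp
      (Computable.list_length.comp Computable.snd) (Computable.const (k + 1))))

theorem cgoodB (k : ℕ) (w : List ℕ → List Bool) (hcomp : Computable w) :
    Computable (goodB k w) := by
  have hmap : Computable fun q : List ℕ × List ℕ => q.2.map (listIndicator q.1) :=
    clist_map (f := fun q : List ℕ × List ℕ => q.2) (g := fun q x => listIndicator q.1 x)
      Computable.snd
      (Computable₂.mk (cmem.comp (Computable.fst.comp Computable.fst) Computable.snd))
  have hp : Computable₂ fun (l : List ℕ) (xs : List ℕ) =>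
      !decide (xs.map (listIndicator l) = w xs) := by
    refine Computable₂.mk ?_
    have hbeq : Computable fun q : List ℕ × List ℕ =>
        decide (q.2.map (listIndicator q.1) = w q.2) :=
      Primrec.eq.decide.to_comp.comp hmap (hcomp.comp Computable.snd)
    exact (Primrec.dom_bool not).to_comp.comp hbeq
  exact clist_all (f := fun l => tuples k (maxL l))
    (p := fun l xs => !decide (xs.map (listIndicator l) = w xs))
    ((ctuples k).comp cmaxL) hp

theorem cerrC : Computable₂ errC :=
  Computable₂.mk <|
    clist_countP (f := fun q : Sample × List ℕ => q.1)
      (p := fun q p => listIndicator q.2 p.1 != p.2)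
      Computable.fst
      (Computable₂.mk ((Primrec.dom_bool₂ (· != ·)).to_comp.comp
        (cmem.comp (Computable.snd.comp Computable.fst)
          (Computable.fst.comp Computable.snd))
        (Computable.snd.comp Computable.snd)))

theorem ccands (k : ℕ) (w : List ℕ → List Bool) (hcomp : Computable w) :
    Computable (cands k w) :=
  clist_filter (f := fun S => subs (List.range (maxFst S + 2)))
    (p := fun _ l => goodB k w l)
    (csubs.comp (Primrec.list_range.to_comp.comp
      (Computable.succ.comp (Computable.succ.comp cmaxFst))))
    (Computable₂.mk ((cgoodB k w hcomp).comp Computable.snd))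

theorem cbestL (k : ℕ) (w : List ℕ → List Bool) (hcomp : Computable w) :
    Computable (bestL k w) := by
  have hh : Computable₂ fun (S : Sample) (p : List ℕ × List ℕ) =>
      if errC S p.2 < errC S p.1 then p.2 else p.1 := by
    refine Computable₂.mk ?_
    refine (Computable.cond (c := fun q : Sample × (List ℕ × List ℕ) =>
        decide (errC q.1 q.2.2 < errC q.1 q.2.1))
      (f := fun q => q.2.2) (g := fun q => q.2.1) ?_
      (Computable.snd.comp Computable.snd)
      (Computable.fst.comp Computable.snd)).of_eq fun q => by
        rw [Bool.cond_decide]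
    exact Primrec.nat_lt.decide.to_comp.comp
      (cerrC.comp Computable.fst (Computable.snd.comp Computable.snd))
      (cerrC.comp Computable.fst (Computable.fst.comp Computable.snd))
  exact (clist_foldl (f := cands k w) (g := fun _ => ([] : List ℕ))
    (h := fun S p => if errC S p.2 < errC S p.1 then p.2 else p.1)
    (ccands k w hcomp) (Computable.const []) hh).of_eq fun S => rfl

theorem cALearn (k : ℕ) (w : List ℕ → List Bool) (hcomp : Computable w) :
    ComputableLearner (ALearn k w) := by
  refine Computable₂.mk ?_
  exact (cmem.comp ((cbestL k w hcomp).comp Computable.fst) Computable.snd).of_eq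
    fun p => rfl

end UGaux


/-- If `w` is a computable `k`-witness of VC dimension for `H`, then
the class `H ∪ 𝓗_good` has a computable ERM. -/
theorem union_good_has_computable_ERM (H : Set Hyp) (k : ℕ) (w : List ℕ → List Bool)
    (hcomp : Computable w) (hwit : IsKWitness k w H) :
    ∃ A : Learner, ComputableLearner A ∧ IsERM A (H ∪ Hgood k w) :=
  ⟨UGaux.ALearn k w, UGaux.cALearn k w hcomp, UGaux.ALearn_isERM hwit⟩
end
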